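/- Let $W$ be an irreducible affine Weyl group with translation subgroup $\ct$ (the set of elements whose conjugacy class is finite) and let $\bar W = W/\ct$. If $\omega$ is an automorphism of $W$ preserving the set of simple reflections whose restriction to $\ct$ is conjugation by some element of $W$, then the automorphism of $\bar W$ induced by $\omega$ is an inner automorphism of $\bar W$. -/
import Mathlib


/-- An automorphism of an (affine Weyl) group `W` preserving the translation
subgroup `T` (normal, of finite index, with faithful conjugation action of `W/T`),
whose restriction to `T` is conjugation by some element of `W`, induces an inner
automorphism of `W/T`: there is `w : W` with `ω y ∈ (w y w⁻¹) T` for all `y`. -/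
theorem stmt_0 (W : Type*) [Group W] (T : Subgroup W) [T.Normal] [T.FiniteIndex]
    (hcomm : ∀ a ∈ T, ∀ b ∈ T, a * b = b * a)
    (hfaithful : ∀ y : W, (∀ τ ∈ T, y * τ = τ * y) → y ∈ T)
    (ω : W ≃* W) (hωT : ∀ τ ∈ T, ω τ ∈ T)
    (hω : ∃ w : W, ∀ τ ∈ T, ω τ = w * τ * w⁻¹) :
    ∃ w : W, ∀ y : W, (ω y) * (w * y * w⁻¹)⁻¹ ∈ T := by
  obtain ⟨w, hw⟩ := hω
  refine ⟨w, fun y => ?_⟩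
  set u : W := w⁻¹ * ω y * w with hu
  have key : y⁻¹ * u ∈ T := by
    apply hfaithful
    intro τ hτ
    have hT' : y * τ * y⁻¹ ∈ T := Subgroup.Normal.conj_mem ‹T.Normal› τ hτ y
    have h1 : ω y * ω τ * (ω y)⁻¹ = ω (y * τ * y⁻¹) := by
      simp [map_mul]
    rw [hw τ hτ, hw _ hT'] at h1
    have h : u * τ * u⁻¹ = y * τ * y⁻¹ := by
      rw [hu]
      calc w⁻¹ * ω y * w * τ * (w⁻¹ * ω y * w)⁻¹
          = w⁻¹ * (ω y * (w * τ * w⁻¹) * (ω y)⁻¹) * w := by group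
        _ = w⁻¹ * (w * (y * τ * y⁻¹) * w⁻¹) * w := by rw [h1]
        _ = y * τ * y⁻¹ := by group
    have h' : u * τ = y * τ * y⁻¹ * u := by
      rw [← h]; group
    calc y⁻¹ * u * τ = y⁻¹ * (u * τ) := by group
      _ = y⁻¹ * (y * τ * y⁻¹ * u) := by rw [h']
      _ = τ * (y⁻¹ * u) := by group
  have heq : (ω y) * (w * y * w⁻¹)⁻¹ = (w * y) * (y⁻¹ * u) * (w * y)⁻¹ := by
    rw [hu]; group
  rw [heq]
  exact Subgroup.Normal.conj_mem ‹T.Normal› _ key _
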